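/- Let s be a positive integer and for each i = 1,...,s let r_i : ℕ → ℂ be a linearly recurrent sequence all of whose associated eigenvalues are either zero or have argument a rational multiple of π, and assume not every r_i has all eigenvalues zero. Let ρ > 0 be the maximum of the moduli of all nonzero eigenvalues of r_1, ..., r_s, and let f : ℕ → ℂ satisfy f(n) ∈ {r_1(n), ..., r_s(n)} for all n ≥ 0. Then there exist a finite set P of polynomials in ℂ[X], a constant C > 0, and a real number σ with 0 ≤ σ < 1, such that for every n ≥ 0 there is a polynomial p ∈ P with | f(n)·ρ^{−n} − p(n) | ≤ C·σ^n. -/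

import Mathlib

/-- `r` satisfies the linear recurrence of order `k` with coefficients `c`:
`r (n + k) = ∑_{j<k} c j * r (n + j)` for all `n ≥ 0`. -/
def IsLinRecWith (r : ℕ → ℂ) (k : ℕ) (c : Fin k → ℂ) : Prop :=
  ∀ n : ℕ, r (n + k) = ∑ j : Fin k, c j * r (n + (j : ℕ))

/-- The characteristic polynomial `X^k - c_{k-1} X^{k-1} - ⋯ - c_0` of the recurrence. -/
noncomputable def charPoly (k : ℕ) (c : Fin k → ℂ) : Polynomial ℂ :=
  Polynomial.X ^ k - ∑ j : Fin k, Polynomial.C (c j) * Polynomial.X ^ (j : ℕ)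

/-- Every eigenvalue (root of the characteristic polynomial) is zero or has
argument a rational multiple of `π`, i.e. `λ/|λ|` is a root of unity. -/
def EigenvaluesRationalArg (k : ℕ) (c : Fin k → ℂ) : Prop :=
  ∀ lam : ℂ, (charPoly k c).IsRoot lam →
    lam = 0 ∨ ∃ m : ℕ, 0 < m ∧ (lam / (‖lam‖ : ℂ)) ^ m = 1

set_option linter.unusedVariables false
set_option linter.unnecessarySeqFocus false

section Aux

open Polynomial Finset


noncomputable def apSeq (A : Polynomial ℂ) (r : ℕ → ℂ) (n : ℕ) : ℂ :=
  A.sum fun j a => a * r (n + j)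

lemma apSeq_zero (r : ℕ → ℂ) (n : ℕ) : apSeq 0 r n = 0 := by
  simp [apSeq]

lemma apSeq_add (A B : Polynomial ℂ) (r : ℕ → ℂ) (n : ℕ) :
    apSeq (A + B) r n = apSeq A r n + apSeq B r n := by
  unfold apSeq
  exact Polynomial.sum_add_index A B _ (by simp) (by intros; ring)

lemma apSeq_monomial (i : ℕ) (a : ℂ) (r : ℕ → ℂ) (n : ℕ) :
    apSeq (Polynomial.monomial i a) r n = a * r (n + i) := by
  unfold apSeq
  exact Polynomial.sum_monomial_index a _ (by simp)

noncomputable def apSeqHom (r : ℕ → ℂ) (n : ℕ) : Polynomial ℂ →+ ℂ where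
  toFun A := apSeq A r n
  map_zero' := apSeq_zero r n
  map_add' A B := apSeq_add A B r n

lemma apSeq_mul (A B : Polynomial ℂ) (r : ℕ → ℂ) (n : ℕ) :
    apSeq (A * B) r n = apSeq A (fun m => apSeq B r m) n := by
  induction A using Polynomial.induction_on' generalizing n with
  | add p q hp hq =>
    rw [add_mul, apSeq_add, apSeq_add, hp, hq]
  | monomial i a =>
    rw [apSeq_monomial]
    have key : ∀ n, apSeq (Polynomial.monomial i a * B) r n = a * apSeq B r (n + i) := by
      intro m
      induction B using Polynomial.induction_on' generalizing m with
      | add p q hp hq =>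
        rw [mul_add, apSeq_add, apSeq_add, hp, hq, mul_add]
      | monomial j b =>
        rw [Polynomial.monomial_mul_monomial, apSeq_monomial, apSeq_monomial, add_assoc]
        ring
    exact key n

lemma apSeq_X_sub_C (lam : ℂ) (r : ℕ → ℂ) (n : ℕ) :
    apSeq (X - C lam) r n = r (n + 1) - lam * r n := by
  have h : (X : Polynomial ℂ) - C lam
      = Polynomial.monomial 1 1 + Polynomial.monomial 0 (-lam) := by
    rw [Polynomial.monomial_one_one_eq_X]
    simp [sub_eq_add_neg]
  rw [h, apSeq_add, apSeq_monomial, apSeq_monomial]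
  ring



/-- For every `x` and `p` there is `q` with `x·q(X+1) - q(X) = p`. -/
lemma exists_comp_sub (x : ℂ) (p : Polynomial ℂ) :
    ∃ q : Polynomial ℂ, C x * q.comp (X + 1) - q = p := by
  suffices h : ∀ d : ℕ, ∀ p : Polynomial ℂ, p.natDegree < d →
      ∃ q : Polynomial ℂ, C x * q.comp (X + 1) - q = p from
    h (p.natDegree + 1) p (Nat.lt_succ_self _)
  intro d
  induction d with
  | zero => intro p hp; omega
  | succ d ih =>
    intro p hp
    by_cases hp0 : p = 0
    · exact ⟨0, by simp [hp0]⟩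
    set e := p.natDegree with he
    -- construct q0 with T q0 of natDegree ≤ e and coeff e = leadingCoeff p
    have hget : ∃ q0 : Polynomial ℂ,
        (C x * q0.comp (X + 1) - q0).natDegree ≤ e ∧
        (C x * q0.comp (X + 1) - q0).coeff e = p.leadingCoeff := by
      by_cases hx : x = 1
      · refine ⟨C (p.leadingCoeff / (e + 1 : ℂ)) * X ^ (e + 1), ?_, ?_⟩
        · subst hx
          rw [Polynomial.natDegree_le_iff_coeff_eq_zero]
          intro m hm
          simp only [mul_comp, C_comp, X_pow_comp, map_one, one_mul, coeff_sub, coeff_C_mul,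
            coeff_X_add_one_pow, coeff_X_pow]
          rcases lt_trichotomy m (e + 1) with h | h | h
          · omega
          · simp [h, Nat.choose_self]
          · rw [Nat.choose_eq_zero_of_lt h]
            simp [Nat.ne_of_gt h]
        · subst hx
          simp only [mul_comp, C_comp, X_pow_comp, map_one, one_mul, coeff_sub, coeff_C_mul,
            coeff_X_add_one_pow, coeff_X_pow]
          rw [Nat.choose_succ_self_right]
          have : ((e : ℂ) + 1) ≠ 0 := by
            exact_mod_cast (Nat.cast_add_one_ne_zero (R := ℂ) e)
          field_simp
          rw [if_neg (by omega), Nat.cast_add_one, sub_zero]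
      · refine ⟨C (p.leadingCoeff / (x - 1)) * X ^ e, ?_, ?_⟩
        · rw [Polynomial.natDegree_le_iff_coeff_eq_zero]
          intro m hm
          simp only [mul_comp, C_comp, X_pow_comp, coeff_sub, coeff_C_mul,
            coeff_X_add_one_pow, coeff_X_pow, ← mul_assoc, ← map_mul]
          rw [Nat.choose_eq_zero_of_lt hm]
          simp [Nat.ne_of_gt hm]
        · simp only [mul_comp, C_comp, X_pow_comp, coeff_sub, coeff_C_mul,
            coeff_X_add_one_pow, coeff_X_pow, ← mul_assoc, ← map_mul, coeff_C_mul]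
          rw [Nat.choose_self]
          have hx1 : x - 1 ≠ 0 := sub_ne_zero.mpr hx
          simp only [if_pos rfl, Nat.cast_one]
          field_simp
          rw [if_pos trivial]
    obtain ⟨q0, hdeg, hco⟩ := hget
    set p' := p - (C x * q0.comp (X + 1) - q0) with hp'
    have hp'deg : p' = 0 ∨ p'.natDegree < e := by
      by_cases h0 : p' = 0
      · exact Or.inl h0
      · right
        have h1 : p'.natDegree ≤ e := le_trans (natDegree_sub_le _ _) (max_le he.symm.le hdeg)
        rcases lt_or_eq_of_le h1 with h | h
        · exact h
        · exfalso
          have : p'.coeff e = 0 := by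
            rw [hp', coeff_sub, hco, he, Polynomial.coeff_natDegree, sub_self]
          rw [← h] at this
          exact h0 (leadingCoeff_eq_zero.mp this)
    have hlt : p' = 0 ∨ p'.natDegree < d := by
      rcases hp'deg with h | h
      · exact Or.inl h
      · exact Or.inr (lt_of_lt_of_le h (by omega))
    have : ∃ q' : Polynomial ℂ, C x * q'.comp (X + 1) - q' = p' := by
      rcases hlt with h | h
      · exact ⟨0, by simp [h]⟩
      · exact ih p' h
    obtain ⟨q', hq'⟩ := this
    refine ⟨q0 + q', ?_⟩
    rw [add_comp]
    have : C x * (q0.comp (X + 1) + q'.comp (X + 1)) - (q0 + q') =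
        (C x * q0.comp (X + 1) - q0) + (C x * q'.comp (X + 1) - q') := by ring
    rw [this, hq', hp']
    ring

/-- Closed form for partial sums `∑_{j<n} p(j) xʲ`. -/
lemma sumPow (x : ℂ) (p : Polynomial ℂ) :
    ∃ q : Polynomial ℂ, ∀ n : ℕ,
      ∑ j ∈ Finset.range n, p.eval (j : ℂ) * x ^ j = q.eval (n : ℂ) * x ^ n - q.eval 0 := by
  obtain ⟨q, hq⟩ := exists_comp_sub x p
  refine ⟨q, fun n => ?_⟩
  induction n with
  | zero => simp
  | succ n ihn =>
    rw [Finset.sum_range_succ, ihn]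
    have h1 : p.eval (n : ℂ) = x * q.eval ((n : ℂ) + 1) - q.eval (n : ℂ) := by
      rw [← hq]
      simp [eval_comp]
    push_cast
    rw [h1]
    ring

lemma closedForm :
    ∀ (d : ℕ) (Q : Polynomial ℂ) (r : ℕ → ℂ), Q.Monic → Q.natDegree = d →
    (∀ n, apSeq Q r n = 0) →
    ∀ (S : Finset ℂ), (0:ℂ) ∉ S → (∀ μ : ℂ, Q.IsRoot μ → μ ≠ 0 → μ ∈ S) →
    ∃ (N : ℕ) (p : ℂ → Polynomial ℂ), ∀ n, N ≤ n →
      r n = ∑ μ ∈ S, (p μ).eval (n : ℂ) * μ ^ n := by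
  intro d
  induction d with
  | zero =>
    intro Q r hQ hd h0 S hS0 hSroot
    have hQ1 : Q = 1 := hQ.natDegree_eq_zero.mp hd
    refine ⟨0, fun _ => 0, fun n _ => ?_⟩
    have h1 := h0 n
    rw [hQ1] at h1
    have h2 : apSeq 1 r n = r n := by
      have : (1 : Polynomial ℂ) = Polynomial.monomial 0 1 := by simp
      rw [this, apSeq_monomial]; simp
    rw [h2] at h1
    simp [h1]
  | succ d ih =>
    intro Q r hQ hd h0 S hS0 hSroot
    have hQne : Q ≠ 0 := hQ.ne_zero
    have hdegpos : 0 < Q.degree := natDegree_pos_iff_degree_pos.mp (by omega)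
    obtain ⟨lam, hlam⟩ := Complex.exists_root hdegpos
    obtain ⟨Q', hQQ'⟩ := dvd_iff_isRoot.mpr hlam
    have hQ'monic : Q'.Monic := (monic_X_sub_C lam).of_mul_monic_left (hQQ' ▸ hQ)
    have hQ'ne : Q' ≠ 0 := hQ'monic.ne_zero
    have hQ'deg : Q'.natDegree = d := by
      have h1 : Q.natDegree = (X - C lam).natDegree + Q'.natDegree := by
        rw [hQQ', natDegree_mul (X_sub_C_ne_zero lam) hQ'ne]
      rw [natDegree_X_sub_C] at h1
      omega
    set r' : ℕ → ℂ := fun n => r (n + 1) - lam * r n with hr'def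
    have h0' : ∀ n, apSeq Q' r' n = 0 := by
      intro n
      have h1 : apSeq (Q' * (X - C lam)) r n = apSeq Q' (fun m => apSeq (X - C lam) r m) n :=
        apSeq_mul _ _ _ _
      have h2 : Q' * (X - C lam) = Q := by rw [hQQ', mul_comm]
      have h3 : (fun m => apSeq (X - C lam) r m) = r' := by
        funext m; rw [apSeq_X_sub_C]
      rw [h2, h3, h0 n] at h1
      exact h1.symm
    have hS' : ∀ μ : ℂ, Q'.IsRoot μ → μ ≠ 0 → μ ∈ S := by
      intro μ h hne
      refine hSroot μ ?_ hne
      rw [IsRoot, hQQ', eval_mul, h, mul_zero]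
    obtain ⟨N', p', hcf'⟩ := ih Q' r' hQ'monic hQ'deg h0' S hS0 hS'
    by_cases hlam0 : lam = 0
    · -- zero eigenvalue: pure shift
      have hshift : ∀ n, r (n + 1) = r' n := by
        intro n; simp [hr'def, hlam0]
      refine ⟨N' + 1, fun μ => C μ⁻¹ * ((p' μ).comp (X - 1)), fun n hn => ?_⟩
      obtain ⟨m, rfl⟩ : ∃ m, n = m + 1 := ⟨n - 1, by omega⟩
      rw [hshift m, hcf' m (by omega)]
      refine Finset.sum_congr rfl fun μ hμ => ?_
      have hμ0 : μ ≠ 0 := fun h => hS0 (h ▸ hμ)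
      rw [eval_mul, eval_C, eval_comp]
      push_cast
      simp only [eval_sub, eval_X, eval_one, add_sub_cancel_right]
      rw [pow_succ]
      field_simp
    · -- nonzero eigenvalue
      have hlamS : lam ∈ S := hSroot lam hlam hlam0
      have hlp : ∀ m : ℕ, (lam : ℂ) ^ m ≠ 0 := fun m => pow_ne_zero m hlam0
      have key : ∀ m : ℕ, r (N' + m) / lam ^ (N' + m)
          = r N' / lam ^ N' + ∑ j ∈ Finset.range m, r' (N' + j) / lam ^ (N' + j + 1) := by
        intro m
        induction m with
        | zero => simp
        | succ m ihm =>
          rw [Finset.sum_range_succ]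
          have hrec : r (N' + m + 1) = lam * r (N' + m) + r' (N' + m) := by
            simp [hr'def]
          have step : r (N' + (m + 1)) / lam ^ (N' + (m + 1))
              = r (N' + m) / lam ^ (N' + m) + r' (N' + m) / lam ^ (N' + m + 1) := by
            rw [show N' + (m + 1) = N' + m + 1 by ring, hrec, pow_succ]
            rw [div_add_div _ _ (hlp (N' + m)) (mul_ne_zero (hlp (N' + m)) hlam0)]
            rw [div_eq_div_iff (mul_ne_zero (hlp (N' + m)) hlam0)
              (mul_ne_zero (hlp (N' + m)) (mul_ne_zero (hlp (N' + m)) hlam0))]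
            ring
          rw [step, ihm]
          ring
      choose q hq using fun μ : ℂ => sumPow (μ / lam) (C lam⁻¹ * p' μ)
      set cf : ℕ → ℂ := fun j => ∑ μ ∈ S, (C lam⁻¹ * p' μ).eval (j : ℂ) * (μ / lam) ^ j
        with hcfdef
      have hcfr : ∀ j, N' ≤ j → r' j / lam ^ (j + 1) = cf j := by
        intro j hj
        rw [hcf' j hj, hcfdef, Finset.sum_div]
        refine Finset.sum_congr rfl fun μ hμ => ?_
        rw [eval_mul, eval_C, div_pow, pow_succ, div_eq_mul_inv, div_eq_mul_inv, mul_inv]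
        ring
      have hsum : ∀ n, ∑ j ∈ Finset.range n, cf j
          = (∑ μ ∈ S, (q μ).eval (n : ℂ) * (μ / lam) ^ n) - ∑ μ ∈ S, (q μ).eval 0 := by
        intro n
        rw [hcfdef]
        rw [Finset.sum_comm]
        rw [← Finset.sum_sub_distrib]
        exact Finset.sum_congr rfl fun μ _ => hq μ n
      set B : ℂ := r N' / lam ^ N' - ∑ j ∈ Finset.range N', cf j - ∑ μ ∈ S, (q μ).eval 0
        with hBdef
      have main : ∀ n, N' ≤ n → r n / lam ^ n
          = B + ∑ μ ∈ S, (q μ).eval (n : ℂ) * (μ / lam) ^ n := by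
        intro n hn
        obtain ⟨m, rfl⟩ : ∃ m, n = N' + m := ⟨n - N', by omega⟩
        rw [key m]
        have h1 : ∑ j ∈ Finset.range m, r' (N' + j) / lam ^ (N' + j + 1)
            = ∑ j ∈ Finset.Ico N' (N' + m), r' j / lam ^ (j + 1) := by
          rw [Finset.sum_Ico_eq_sum_range]
          simp
        have h2 : ∑ j ∈ Finset.Ico N' (N' + m), r' j / lam ^ (j + 1)
            = ∑ j ∈ Finset.Ico N' (N' + m), cf j := by
          refine Finset.sum_congr rfl fun j hj => ?_
          exact hcfr j (Finset.mem_Ico.mp hj).1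
        rw [h1, h2, Finset.sum_Ico_eq_sub _ (by omega : N' ≤ N' + m), hsum (N' + m)]
        rw [hBdef]
        ring
      refine ⟨N', fun μ => q μ + if μ = lam then C B else 0, fun n hn => ?_⟩
      have h3 : r n = (B + ∑ μ ∈ S, (q μ).eval (n : ℂ) * (μ / lam) ^ n) * lam ^ n :=
        (div_eq_iff (hlp n)).mp (main n hn)
      rw [h3, add_mul, Finset.sum_mul]
      have h4 : ∀ μ ∈ S, (q μ).eval (n : ℂ) * (μ / lam) ^ n * lam ^ n
          = (q μ).eval (n : ℂ) * μ ^ n := by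
        intro μ _
        rw [div_pow, mul_assoc, div_mul_cancel₀ _ (hlp n)]
      rw [Finset.sum_congr rfl h4]
      have h5 : ∀ μ ∈ S, ((q μ + if μ = lam then C B else 0).eval (n : ℂ)) * μ ^ n
          = (q μ).eval (n : ℂ) * μ ^ n + (if μ = lam then B * μ ^ n else 0) := by
        intro μ _
        by_cases h : μ = lam <;> simp [h] <;> ring
      rw [Finset.sum_congr rfl h5, Finset.sum_add_distrib,
        Finset.sum_ite_eq' S lam (fun μ => B * μ ^ n), if_pos hlamS]
      ring

lemma charPoly_monic (k : ℕ) (hk : 1 ≤ k) (c : Fin k → ℂ) : (charPoly k c).Monic := by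
  unfold charPoly
  apply Polynomial.monic_X_pow_sub
  refine lt_of_le_of_lt (Polynomial.degree_sum_le _ _) ?_
  rw [Finset.sup_lt_iff (by exact_mod_cast WithBot.bot_lt_coe k)]
  intro j _
  refine lt_of_le_of_lt (Polynomial.degree_C_mul_X_pow_le _ _) ?_
  exact_mod_cast j.isLt

lemma linrec_apSeq {r : ℕ → ℂ} {k : ℕ} {c : Fin k → ℂ} (h : IsLinRecWith r k c) :
    ∀ n, apSeq (charPoly k c) r n = 0 := by
  intro n
  have h1 : apSeq (charPoly k c) r n = apSeqHom r n (charPoly k c) := rfl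
  rw [h1]
  unfold charPoly
  rw [map_sub, map_sum]
  have h2 : apSeqHom r n (X ^ k) = r (n + k) := by
    show apSeq (X ^ k) r n = _
    rw [Polynomial.X_pow_eq_monomial, apSeq_monomial, one_mul]
  have h3 : ∀ j : Fin k, apSeqHom r n (C (c j) * X ^ (j : ℕ)) = c j * r (n + (j : ℕ)) := by
    intro j
    show apSeq _ r n = _
    rw [Polynomial.C_mul_X_pow_eq_monomial, apSeq_monomial]
  rw [h2, Finset.sum_congr rfl fun j _ => h3 j, h n]
  ring

lemma poly_geom_bound (p : Polynomial ℂ) (u : ℝ) (h0 : 0 ≤ u) (h1 : u < 1) :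
    ∃ C : ℝ, 0 ≤ C ∧ ∀ n : ℕ, ‖p.eval (n : ℂ)‖ * u ^ n ≤ C := by
  have hbdd : ∀ j : ℕ, ∃ Cj : ℝ, 0 ≤ Cj ∧ ∀ n : ℕ, (n : ℝ) ^ j * u ^ n ≤ Cj := by
    intro j
    have ht := tendsto_pow_const_mul_const_pow_of_lt_one j h0 h1
    obtain ⟨b, hb⟩ := ht.bddAbove_range
    refine ⟨b, ?_, fun n => hb (Set.mem_range_self n)⟩
    have h01 : (0:ℝ) ≤ ((1:ℕ):ℝ) ^ j * u ^ 1 :=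
      mul_nonneg (pow_nonneg (by norm_num) j) (pow_nonneg h0 1)
    exact le_trans h01 (hb (Set.mem_range_self 1))
  choose Cj hCj0 hCj using hbdd
  refine ⟨∑ j ∈ Finset.range (p.natDegree + 1), ‖p.coeff j‖ * Cj j,
    Finset.sum_nonneg fun j _ => mul_nonneg (norm_nonneg _) (hCj0 j), fun n => ?_⟩
  have h2 : ‖p.eval ((n : ℕ) : ℂ)‖ ≤ ∑ j ∈ Finset.range (p.natDegree + 1), ‖p.coeff j‖ * (n : ℝ) ^ j := by
    rw [Polynomial.eval_eq_sum_range]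
    refine le_trans (norm_sum_le _ _) (Finset.sum_le_sum fun j _ => ?_)
    rw [norm_mul, norm_pow, Complex.norm_natCast]
  calc ‖p.eval ((n : ℕ) : ℂ)‖ * u ^ n
      ≤ (∑ j ∈ Finset.range (p.natDegree + 1), ‖p.coeff j‖ * (n : ℝ) ^ j) * u ^ n :=
        mul_le_mul_of_nonneg_right h2 (pow_nonneg h0 n)
    _ = ∑ j ∈ Finset.range (p.natDegree + 1), ‖p.coeff j‖ * ((n : ℝ) ^ j * u ^ n) := by
        rw [Finset.sum_mul]; exact Finset.sum_congr rfl fun j _ => by ring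
    _ ≤ ∑ j ∈ Finset.range (p.natDegree + 1), ‖p.coeff j‖ * Cj j :=
        Finset.sum_le_sum fun j _ => mul_le_mul_of_nonneg_left (hCj j n) (norm_nonneg _)


end Aux

open Polynomial Finset in
theorem scaled_coefficients_close_to_polynomial_values
    (s : ℕ) (hs : 0 < s)
    (r : Fin s → ℕ → ℂ) (k : Fin s → ℕ) (hk : ∀ i, 1 ≤ k i)
    (c : (i : Fin s) → Fin (k i) → ℂ)
    (hrec : ∀ i, IsLinRecWith (r i) (k i) (c i))
    (heig : ∀ i, EigenvaluesRationalArg (k i) (c i))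
    (ρ : ℝ) (hρ : 0 < ρ)
    (hρub : ∀ i : Fin s, ∀ lam : ℂ, (charPoly (k i) (c i)).IsRoot lam →
      lam ≠ 0 → ‖lam‖ ≤ ρ)
    (hρmax : ∃ i : Fin s, ∃ lam : ℂ, (charPoly (k i) (c i)).IsRoot lam ∧
      lam ≠ 0 ∧ ‖lam‖ = ρ)
    (f : ℕ → ℂ) (hf : ∀ n : ℕ, ∃ i : Fin s, f n = r i n) :
    ∃ (P : Finset (Polynomial ℂ)) (C : ℝ) (σ : ℝ),
      0 < C ∧ 0 ≤ σ ∧ σ < 1 ∧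
      ∀ n : ℕ, ∃ p ∈ P,
        ‖f n / (ρ : ℂ) ^ n - p.eval (n : ℂ)‖ ≤ C * σ ^ n := by
  classical
  set S : Fin s → Finset ℂ := fun i => ((charPoly (k i) (c i)).roots.toFinset).erase 0 with hSdef
  have hQmonic : ∀ i, (charPoly (k i) (c i)).Monic := fun i => charPoly_monic _ (hk i) _
  have hS0 : ∀ i, (0 : ℂ) ∉ S i := fun i => Finset.notMem_erase _ _
  have hSmem : ∀ i (μ : ℂ), μ ∈ S i → (charPoly (k i) (c i)).IsRoot μ ∧ μ ≠ 0 := by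
    intro i μ hμ
    rw [hSdef] at hμ
    obtain ⟨hne, hmem⟩ := Finset.mem_erase.mp hμ
    rw [Multiset.mem_toFinset, Polynomial.mem_roots (hQmonic i).ne_zero] at hmem
    exact ⟨hmem, hne⟩
  have hSroot : ∀ i (μ : ℂ), (charPoly (k i) (c i)).IsRoot μ → μ ≠ 0 → μ ∈ S i := by
    intro i μ hroot hne
    rw [hSdef]
    refine Finset.mem_erase.mpr ⟨hne, ?_⟩
    rw [Multiset.mem_toFinset, Polynomial.mem_roots (hQmonic i).ne_zero]
    exact hroot
  have hcfex : ∀ i, ∃ (N : ℕ) (p : ℂ → Polynomial ℂ), ∀ n, N ≤ n →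
      r i n = ∑ μ ∈ S i, (p μ).eval (n : ℂ) * μ ^ n := fun i =>
    closedForm _ _ _ (hQmonic i) rfl (linrec_apSeq (hrec i)) (S i) (hS0 i) (hSroot i)
  choose N p hcf using hcfex
  -- root of unity orders
  have hρC : ((ρ : ℂ)) ≠ 0 := Complex.ofReal_ne_zero.mpr hρ.ne'
  have hex2 : ∀ (i : Fin s) (μ : ℂ), ∃ m : ℕ, 0 < m ∧
      (μ ∈ S i → ‖μ‖ = ρ → (μ / (ρ : ℂ)) ^ m = 1) := by
    intro i μ
    by_cases h : μ ∈ S i ∧ ‖μ‖ = ρ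
    · obtain ⟨hroot, hne⟩ := hSmem i μ h.1
      rcases heig i μ hroot with h0 | ⟨m, hm, hpow⟩
      · exact absurd h0 hne
      · refine ⟨m, hm, fun _ _ => ?_⟩
        rw [← h.2]
        exact_mod_cast hpow
    · exact ⟨1, one_pos, fun h1 h2 => absurd ⟨h1, h2⟩ h⟩
  choose m hmpos hmpow using hex2
  set M : ℕ := ∏ i : Fin s, ∏ μ ∈ S i, m i μ with hMdef
  have hMpos : 0 < M :=
    Finset.prod_pos fun i _ => Finset.prod_pos fun μ hμ => hmpos i μ
  have hMpow : ∀ i (μ : ℂ), μ ∈ S i → ‖μ‖ = ρ → (μ / (ρ : ℂ)) ^ M = 1 := by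
    intro i μ hμ hnorm
    have hdvd : m i μ ∣ M := by
      refine dvd_trans (Finset.dvd_prod_of_mem _ hμ) (Finset.dvd_prod_of_mem _ (Finset.mem_univ i))
    obtain ⟨t, ht⟩ := hdvd
    rw [ht, pow_mul, hmpow i μ hμ hnorm, one_pow]
  have hperiod : ∀ i (μ : ℂ) (n : ℕ), μ ∈ S i → ‖μ‖ = ρ →
      (μ / (ρ : ℂ)) ^ n = (μ / (ρ : ℂ)) ^ (n % M) := by
    intro i μ n hμ hnorm
    conv_lhs => rw [← Nat.div_add_mod n M]
    rw [pow_add, pow_mul, hMpow i μ hμ hnorm, one_pow, one_mul]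
  -- the polynomials
  set g : Fin s → ℕ → Polynomial ℂ := fun i j =>
    ∑ μ ∈ (S i).filter (fun μ => ‖μ‖ = ρ), Polynomial.C ((μ / (ρ : ℂ)) ^ j) * p i μ with hgdef
  set Nmax : ℕ := Finset.univ.sup N with hNmax
  set P : Finset (Polynomial ℂ) :=
    ((Finset.univ ×ˢ Finset.range M).image fun ij => g ij.1 ij.2) ∪
      ((Finset.range Nmax).image fun n => Polynomial.C (f n / (ρ : ℂ) ^ n)) with hPdef
  -- sigma
  set T : Finset ℝ := insert 0 ((Finset.univ.biUnion fun i =>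
    (S i).filter fun μ => ‖μ‖ < ρ).image fun μ => ‖μ‖ / ρ) with hTdef
  have hTne : T.Nonempty := ⟨0, Finset.mem_insert_self _ _⟩
  set τ : ℝ := T.max' hTne with hτdef
  have hτ0 : 0 ≤ τ := Finset.le_max' _ _ (Finset.mem_insert_self _ _)
  have hτ1 : τ < 1 := by
    rw [hτdef, Finset.max'_lt_iff]
    intro b hb
    rw [hTdef] at hb
    rcases Finset.mem_insert.mp hb with h | h
    · simp [h]
    · obtain ⟨μ, hμ, rfl⟩ := Finset.mem_image.mp h
      obtain ⟨i, _, hμ2⟩ := Finset.mem_biUnion.mp hμ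
      have := (Finset.mem_filter.mp hμ2).2
      exact (div_lt_one hρ).mpr this
  have hτub : ∀ i (μ : ℂ), μ ∈ S i → ‖μ‖ < ρ → ‖μ‖ / ρ ≤ τ := by
    intro i μ hμ hlt
    refine Finset.le_max' _ _ ?_
    rw [hTdef]
    refine Finset.mem_insert_of_mem (Finset.mem_image.mpr ⟨μ, ?_, rfl⟩)
    exact Finset.mem_biUnion.mpr ⟨i, Finset.mem_univ i, Finset.mem_filter.mpr ⟨hμ, hlt⟩⟩
  set σ : ℝ := (1 + τ) / 2 with hσdef
  have hσpos : 0 < σ := by rw [hσdef]; linarith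
  have hσ1 : σ < 1 := by rw [hσdef]; linarith
  have hτσ : τ < σ := by rw [hσdef]; linarith
  -- constants
  have hexD : ∀ (i : Fin s) (μ : ℂ), ∃ D : ℝ, 0 ≤ D ∧ ∀ n : ℕ, μ ∈ S i → ‖μ‖ < ρ →
      ‖(p i μ).eval (n : ℂ)‖ * (‖μ‖ / ρ) ^ n ≤ D * σ ^ n := by
    intro i μ
    by_cases h : μ ∈ S i ∧ ‖μ‖ < ρ
    · have hu0 : 0 ≤ ‖μ‖ / ρ / σ := by positivity
      have hu1 : ‖μ‖ / ρ / σ < 1 :=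
        (div_lt_one hσpos).mpr (lt_of_le_of_lt (hτub i μ h.1 h.2) hτσ)
      obtain ⟨D, hD0, hD⟩ := poly_geom_bound (p i μ) _ hu0 hu1
      refine ⟨D, hD0, fun n _ _ => ?_⟩
      have key : (‖μ‖ / ρ) ^ n = (‖μ‖ / ρ / σ) ^ n * σ ^ n := by
        rw [← mul_pow, div_mul_cancel₀ _ hσpos.ne']
      rw [key, ← mul_assoc]
      exact mul_le_mul_of_nonneg_right (hD n) (pow_nonneg hσpos.le n)
    · exact ⟨0, le_refl 0, fun n h1 h2 => absurd ⟨h1, h2⟩ h⟩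
  choose D hD0 hD using hexD
  set Ctot : ℝ := ∑ i : Fin s, ∑ μ ∈ S i, D i μ with hCtotdef
  have hCtot0 : 0 ≤ Ctot :=
    Finset.sum_nonneg fun i _ => Finset.sum_nonneg fun μ _ => hD0 i μ
  refine ⟨P, Ctot + 1, σ, by linarith, hσpos.le, hσ1, fun n => ?_⟩
  by_cases hn : n < Nmax
  · refine ⟨Polynomial.C (f n / (ρ : ℂ) ^ n), ?_, ?_⟩
    · exact Finset.mem_union_right _ (Finset.mem_image.mpr
        ⟨n, Finset.mem_range.mpr hn, rfl⟩)
    · rw [Polynomial.eval_C, sub_self, norm_zero]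
      positivity
  · push_neg at hn
    obtain ⟨i, hfn⟩ := hf n
    have hni : N i ≤ n := le_trans (Finset.le_sup (Finset.mem_univ i)) hn
    refine ⟨g i (n % M), ?_, ?_⟩
    · refine Finset.mem_union_left _ (Finset.mem_image.mpr
        ⟨(i, n % M), ?_, rfl⟩)
      exact Finset.mem_product.mpr ⟨Finset.mem_univ i,
        Finset.mem_range.mpr (Nat.mod_lt n hMpos)⟩
    · -- main estimate
      have hnormle : ∀ μ ∈ S i, ‖μ‖ ≤ ρ := fun μ hμ =>
        hρub i μ (hSmem i μ hμ).1 (hSmem i μ hμ).2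
      have heval : (g i (n % M)).eval (n : ℂ)
          = ∑ μ ∈ (S i).filter (fun μ => ‖μ‖ = ρ), (p i μ).eval (n : ℂ) * (μ / (ρ : ℂ)) ^ n := by
        rw [hgdef]
        rw [Polynomial.eval_finset_sum]
        refine Finset.sum_congr rfl fun μ hμ => ?_
        obtain ⟨hμS, hμρ⟩ := Finset.mem_filter.mp hμ
        rw [Polynomial.eval_mul, Polynomial.eval_C, ← hperiod i μ n hμS hμρ]
        ring
      have hfρ : f n / (ρ : ℂ) ^ n = ∑ μ ∈ S i, (p i μ).eval (n : ℂ) * (μ / (ρ : ℂ)) ^ n := by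
        rw [hfn, hcf i n hni, Finset.sum_div]
        refine Finset.sum_congr rfl fun μ hμ => ?_
        rw [div_pow, mul_div_assoc]
      have hsplit : f n / (ρ : ℂ) ^ n - (g i (n % M)).eval (n : ℂ)
          = ∑ μ ∈ (S i).filter (fun μ => ¬ ‖μ‖ = ρ), (p i μ).eval (n : ℂ) * (μ / (ρ : ℂ)) ^ n := by
        rw [hfρ, heval, ← Finset.sum_filter_add_sum_filter_not (S i) (fun μ => ‖μ‖ = ρ)]
        ring
      rw [hsplit]
      refine le_trans (norm_sum_le _ _) ?_
      have hterm : ∀ μ ∈ (S i).filter (fun μ => ¬ ‖μ‖ = ρ),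
          ‖(p i μ).eval (n : ℂ) * (μ / (ρ : ℂ)) ^ n‖ ≤ D i μ * σ ^ n := by
        intro μ hμ
        obtain ⟨hμS, hμρ⟩ := Finset.mem_filter.mp hμ
        have hlt : ‖μ‖ < ρ := lt_of_le_of_ne (hnormle μ hμS) hμρ
        have h1 : ‖(μ / (ρ : ℂ)) ^ n‖ = (‖μ‖ / ρ) ^ n := by
          rw [norm_pow, norm_div, Complex.norm_real, Real.norm_eq_abs, abs_of_pos hρ]
        rw [norm_mul, h1]
        exact hD i μ n hμS hlt
      refine le_trans (Finset.sum_le_sum hterm) ?_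
      have h2 : ∑ μ ∈ (S i).filter (fun μ => ¬ ‖μ‖ = ρ), D i μ * σ ^ n
          ≤ ∑ μ ∈ S i, D i μ * σ ^ n := by
        refine Finset.sum_le_sum_of_subset_of_nonneg (Finset.filter_subset _ _) ?_
        intro μ _ _
        have := hD0 i μ
        positivity
      refine le_trans h2 ?_
      rw [← Finset.sum_mul]
      have h3 : ∑ μ ∈ S i, D i μ ≤ Ctot + 1 := by
        rw [hCtotdef]
        have h4 : ∑ μ ∈ S i, D i μ ≤ ∑ i : Fin s, ∑ μ ∈ S i, D i μ :=
          Finset.single_le_sum (f := fun i => ∑ μ ∈ S i, D i μ)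
            (fun i _ => Finset.sum_nonneg fun μ _ => hD0 i μ) (Finset.mem_univ i)
        linarith
      exact mul_le_mul_of_nonneg_right h3 (pow_nonneg hσpos.le n)
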